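/- Let 𝒳 be a finite set with reversible data (K, ϖ), and let ν : 𝒳 → [0,∞). For Ψ : 𝒳×𝒳 → ℝ and its antisymmetrization Ψ̌(x,y) = ½Ψ(x,y) − ½Ψ(y,x), the weighted action satisfies A'(ν, Ψ̌) ≤ A'(ν, Ψ), where A'(ν,Ψ) = ½ Σ_{x,y} α(Ψ(x,y), ν(x), ν(y)) K(x,y) ϖ(x), with α(v,s,t) = v²/θ(s,t) (conventions 0/0 = 0, v²/0 = +∞ for v ≠ 0) and θ the logarithmic mean extended by 0 on the boundary. -/

import Mathlib

open scoped ENNReal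

/-- The logarithmic mean, extended by 0 on the boundary of [0,∞)². -/
noncomputable def logMean0 (u v : ℝ) : ℝ :=
  if u ≤ 0 ∨ v ≤ 0 then 0
  else if u = v then v else (u - v) / (Real.log u - Real.log v)

/-- The extended-valued action density α(v,s,t) = v²/θ(s,t), with the conventions
    0²/0 = 0 and v²/0 = +∞ for v ≠ 0. -/
noncomputable def alphaE (v s t : ℝ) : ℝ≥0∞ :=
  if logMean0 s t = 0 then (if v = 0 then 0 else ⊤)
  else ENNReal.ofReal (v ^ 2 / logMean0 s t)

lemma logMean0_nonneg (u v : ℝ) : 0 ≤ logMean0 u v := by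
  unfold logMean0
  split_ifs with h1 h2
  · exact le_refl 0
  · push_neg at h1; linarith [h1.2]
  · push_neg at h1
    rcases lt_trichotomy u v with h | h | h
    · rw [div_nonneg_iff]
      right
      constructor
      · linarith
      · simp only [sub_nonpos]
        exact (Real.log_le_log_iff h1.1 h1.2).mpr h.le
    · exact absurd h h2
    · apply div_nonneg
      · linarith
      · simp only [sub_nonneg]
        exact (Real.log_le_log_iff h1.2 h1.1).mpr h.le

lemma logMean0_symm (u v : ℝ) : logMean0 u v = logMean0 v u := by
  unfold logMean0
  by_cases h1 : u ≤ 0 ∨ v ≤ 0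
  · rw [if_pos h1, if_pos (Or.symm h1)]
  · rw [if_neg h1, if_neg (fun h => h1 (Or.symm h))]
    by_cases h2 : u = v
    · rw [if_pos h2, if_pos h2.symm, h2]
    · rw [if_neg h2, if_neg (fun h => h2 h.symm), ← neg_div_neg_eq]
      ring_nf

lemma alphaE_symm (v s t : ℝ) : alphaE v s t = alphaE v t s := by
  unfold alphaE; rw [logMean0_symm]

lemma alphaE_key (s t a b : ℝ) :
    alphaE (1 / 2 * a - 1 / 2 * b) s t
      ≤ 1 / 2 * alphaE a s t + 1 / 2 * alphaE b s t := by
  unfold alphaE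
  by_cases h : logMean0 s t = 0
  · simp only [h, if_pos rfl]
    by_cases hv : 1 / 2 * a - 1 / 2 * b = 0
    · rw [if_pos hv]; exact zero_le
    · have : a ≠ 0 ∨ b ≠ 0 := by
        by_contra hc; push_neg at hc; apply hv; rw [hc.1, hc.2]; ring
      rw [if_neg hv]
      rcases this with ha | hb
      · rw [if_neg ha]; simp [ENNReal.mul_top]
      · rw [if_neg hb]; simp [ENNReal.mul_top]
  · have hθ : 0 < logMean0 s t := lt_of_le_of_ne (logMean0_nonneg s t) (Ne.symm h)
    rw [if_neg h, if_neg h, if_neg h]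
    have h2 : (1 / 2 : ℝ≥0∞) = ENNReal.ofReal (1 / 2) := by
      rw [ENNReal.ofReal_div_of_pos] <;> simp
    rw [h2, ← ENNReal.ofReal_mul (by norm_num), ← ENNReal.ofReal_mul (by norm_num),
      ← ENNReal.ofReal_add (by positivity) (by positivity)]
    apply ENNReal.ofReal_le_ofReal
    rw [← mul_div_assoc, ← mul_div_assoc, ← add_div]
    gcongr
    nlinarith [sq_nonneg (a + b)]

/-- Antisymmetrization does not increase the weighted action:
    A'(ν, Ψ̌) ≤ A'(ν, Ψ) where Ψ̌(x,y) = ½Ψ(x,y) − ½Ψ(y,x) and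
    A'(ν,Ψ) = ½ Σ_{x,y} α(Ψ(x,y), ν(x), ν(y)) K(x,y) ϖ(x). -/
theorem action_antisymmetrization_le {X : Type*} [Fintype X]
    (K : X → X → ℝ) (ϖ : X → ℝ)
    (hK : ∀ x y, 0 ≤ K x y) (hϖ : ∀ x, 0 < ϖ x)
    (hrev : ∀ x y, K x y * ϖ x = K y x * ϖ y)
    (ν : X → ℝ) (hν : ∀ x, 0 ≤ ν x) (Ψ : X → X → ℝ) :
    (1 / 2 : ℝ≥0∞) * ∑ x : X, ∑ y : X,
        alphaE ((1 / 2) * Ψ x y - (1 / 2) * Ψ y x) (ν x) (ν y)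
          * ENNReal.ofReal (K x y * ϖ x)
      ≤ (1 / 2 : ℝ≥0∞) * ∑ x : X, ∑ y : X,
          alphaE (Ψ x y) (ν x) (ν y) * ENNReal.ofReal (K x y * ϖ x) := by
  have hswap : ∑ x : X, ∑ y : X,
        alphaE (Ψ y x) (ν x) (ν y) * ENNReal.ofReal (K x y * ϖ x)
      = ∑ x : X, ∑ y : X,
        alphaE (Ψ x y) (ν x) (ν y) * ENNReal.ofReal (K x y * ϖ x) := by
    rw [Finset.sum_comm]
    refine Finset.sum_congr rfl fun x _ => Finset.sum_congr rfl fun y _ => ?_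
    rw [alphaE_symm, hrev y x]
  refine mul_le_mul_right ?_ _
  calc ∑ x : X, ∑ y : X,
        alphaE ((1 / 2) * Ψ x y - (1 / 2) * Ψ y x) (ν x) (ν y)
          * ENNReal.ofReal (K x y * ϖ x)
      ≤ ∑ x : X, ∑ y : X,
        (1 / 2 * alphaE (Ψ x y) (ν x) (ν y) + 1 / 2 * alphaE (Ψ y x) (ν x) (ν y))
          * ENNReal.ofReal (K x y * ϖ x) := by
        refine Finset.sum_le_sum fun x _ => Finset.sum_le_sum fun y _ => ?_
        exact mul_le_mul_left (alphaE_key _ _ _ _) _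
    _ = 1 / 2 * ∑ x : X, ∑ y : X,
          alphaE (Ψ x y) (ν x) (ν y) * ENNReal.ofReal (K x y * ϖ x)
        + 1 / 2 * ∑ x : X, ∑ y : X,
          alphaE (Ψ y x) (ν x) (ν y) * ENNReal.ofReal (K x y * ϖ x) := by
        simp only [add_mul, Finset.sum_add_distrib, Finset.mul_sum, mul_assoc]
    _ = ∑ x : X, ∑ y : X,
          alphaE (Ψ x y) (ν x) (ν y) * ENNReal.ofReal (K x y * ϖ x) := by
        rw [hswap, ← two_mul, ← mul_assoc]
        norm_num
        rw [ENNReal.mul_inv_cancel (by norm_num) (by norm_num), one_mul]
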